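/- Fix integers p ≥ 1 and n ≥ 1, a point θ₀ ∈ ℝ^p, vectors g_1,…,g_n ∈ ℝ^p, rewards r_1,…,r_n ∈ ℝ, and reals λ > 0, m > 0. Let b : ℝ → ℝ be twice differentiable with constants 0 < L_b ≤ U_b satisfying L_b ≤ b''(z) ≤ U_b for all z ∈ ℝ. Define ℓ_λ(θ) := ∑_{s=1}^n ( r_s·⟨g_s, θ − θ₀⟩ − b(⟨g_s, θ − θ₀⟩) ) − (m·λ/2)·‖θ − θ₀‖₂². Let α ≥ 0, let g_i, g_j ∈ ℝ^p, and let θ_i and θ_j be global maximizers over ℝ^p of θ ↦ ℓ_λ(θ) + α·⟨g_i, θ − θ₀⟩ and θ ↦ ℓ_λ(θ) + α·⟨g_j, θ − θ₀⟩ respectively. Then there exist real numbers ξ_1,…,ξ_n, with each ξ_s lying in the closed interval between ⟨g_s, θ_i − θ₀⟩ and ⟨g_s, θ_j − θ₀⟩, such that the matrix U := λ·I + (1/m)·∑_{s=1}^n b''(ξ_s)·g_s g_sᵀ is symmetric positive definite and 0 = (g_i + g_j)ᵀ (θ_j − θ_i) + (α/m)·( ‖g_i‖²_{U⁻¹} −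 ‖g_j‖²_{U⁻¹} ). -/

import Mathlib

open Matrix

section Helpers

lemma sum_mulVec' {ι : Type*} (s : Finset ι) {p : ℕ} (A : ι → Matrix (Fin p) (Fin p) ℝ)
    (x : Fin p → ℝ) : (∑ i ∈ s, A i) *ᵥ x = ∑ i ∈ s, A i *ᵥ x := by
  ext k
  simp only [Matrix.mulVec, dotProduct, Finset.sum_apply, Matrix.sum_apply, Finset.sum_mul]
  rw [Finset.sum_comm]

lemma vecMulVec_mulVec' {p : ℕ} (u v x : Fin p → ℝ) :
    vecMulVec u v *ᵥ x = (v ⬝ᵥ x) • u := by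
  ext k
  simp [Matrix.mulVec, dotProduct, vecMulVec_apply, Finset.mul_sum, mul_comm, mul_left_comm]

lemma dot_sum' {ι : Type*} (s : Finset ι) {p : ℕ} (v : Fin p → ℝ) (w : ι → Fin p → ℝ) :
    v ⬝ᵥ (∑ i ∈ s, w i) = ∑ i ∈ s, v ⬝ᵥ w i := by
  simp only [dotProduct, Finset.sum_apply, Finset.mul_sum]
  rw [Finset.sum_comm]

lemma curvMat_mulVec {p n : ℕ} (lam m : ℝ) (c : Fin n → ℝ) (g : Fin n → Fin p → ℝ)
    (x : Fin p → ℝ) :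
    (lam • (1 : Matrix (Fin p) (Fin p) ℝ) + (1 / m) • ∑ s, c s • vecMulVec (g s) (g s)) *ᵥ x
      = lam • x + (1 / m) • ∑ s, (c s * (g s ⬝ᵥ x)) • g s := by
  rw [add_mulVec, smul_mulVec, one_mulVec, smul_mulVec, sum_mulVec']
  congr 2
  exact Finset.sum_congr rfl fun s _ => by
    rw [smul_mulVec, vecMulVec_mulVec', smul_smul]

lemma quadform {p n : ℕ} (lam m : ℝ) (c : Fin n → ℝ) (g : Fin n → Fin p → ℝ)
    (x : Fin p → ℝ) :
    x ⬝ᵥ (lam • (1 : Matrix (Fin p) (Fin p) ℝ)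
        + (1 / m) • ∑ s, c s • vecMulVec (g s) (g s)) *ᵥ x
      = lam * (x ⬝ᵥ x) + (1 / m) * ∑ s, c s * (g s ⬝ᵥ x) ^ 2 := by
  rw [curvMat_mulVec, dotProduct_add, dotProduct_smul, dotProduct_smul, dot_sum']
  simp only [smul_eq_mul]
  congr 2
  exact Finset.sum_congr rfl fun s _ => by
    rw [dotProduct_smul, smul_eq_mul, dotProduct_comm x (g s)]
    ring

lemma dot_mulVec_symm {p : ℕ} {A : Matrix (Fin p) (Fin p) ℝ} (h : A.IsHermitian)
    (x y : Fin p → ℝ) : x ⬝ᵥ A *ᵥ y = y ⬝ᵥ A *ᵥ x := by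
  have ht : Aᵀ = A := by
    ext i j
    have := congrFun (congrFun h i) j
    simpa using this
  rw [dotProduct_mulVec, ← ht, vecMul_transpose, ht, dotProduct_comm]

lemma mvt_uIcc (f : ℝ → ℝ) (hf : Differentiable ℝ f) (x y : ℝ) :
    ∃ ξ ∈ Set.uIcc x y, f y - f x = deriv f ξ * (y - x) := by
  rcases lt_trichotomy x y with h | h | h
  · obtain ⟨c, hc, hc'⟩ := exists_deriv_eq_slope f h hf.continuous.continuousOn
      hf.differentiableOn
    refine ⟨c, Set.mem_uIcc.2 (Or.inl ⟨hc.1.le, hc.2.le⟩), ?_⟩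
    rw [hc', div_mul_cancel₀]
    exact sub_ne_zero.2 h.ne'
  · exact ⟨x, Set.left_mem_uIcc, by simp [h]⟩
  · obtain ⟨c, hc, hc'⟩ := exists_deriv_eq_slope f h hf.continuous.continuousOn
      hf.differentiableOn
    refine ⟨c, Set.mem_uIcc.2 (Or.inr ⟨hc.1.le, hc.2.le⟩), ?_⟩
    have hxy : x - y ≠ 0 := sub_ne_zero.2 h.ne'
    field_simp at hc'
    nlinarith [hc']

end Helpers

/-- The regularized exponential-family surrogate log-likelihood
ℓ_λ(θ) = ∑_s ( r_s·⟨g_s, θ−θ₀⟩ − b(⟨g_s, θ−θ₀⟩) ) − (mλ/2)·‖θ−θ₀‖₂². -/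
noncomputable def ellLam {p n : ℕ} (θ₀ : Fin p → ℝ) (g : Fin n → Fin p → ℝ)
    (r : Fin n → ℝ) (b : ℝ → ℝ) (lam m : ℝ) (θ : Fin p → ℝ) : ℝ :=
  (∑ s, (r s * (g s ⬝ᵥ (θ - θ₀)) - b (g s ⬝ᵥ (θ - θ₀))))
    - m * lam / 2 * (∑ i, (θ i - θ₀ i) ^ 2)

/-- First order condition for an RBMLE maximizer: all directional derivatives vanish. -/
lemma foc {p n : ℕ} (θ₀ : Fin p → ℝ) (g : Fin n → Fin p → ℝ) (r : Fin n → ℝ)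
    (lam m : ℝ) (b : ℝ → ℝ) (hb : Differentiable ℝ b)
    (α : ℝ) (ga θa : Fin p → ℝ)
    (hθa : ∀ θ : Fin p → ℝ, ellLam θ₀ g r b lam m θ + α * (ga ⬝ᵥ (θ - θ₀)) ≤
        ellLam θ₀ g r b lam m θa + α * (ga ⬝ᵥ (θa - θ₀)))
    (v : Fin p → ℝ) :
    (∑ s, (r s - deriv b (g s ⬝ᵥ (θa - θ₀))) * (g s ⬝ᵥ v))
      - m * lam * ((θa - θ₀) ⬝ᵥ v) + α * (ga ⬝ᵥ v) = 0 := by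
  set ψ : ℝ → ℝ := fun t =>
      (∑ s, (r s * ((g s ⬝ᵥ (θa - θ₀)) + t * (g s ⬝ᵥ v))
          - b ((g s ⬝ᵥ (θa - θ₀)) + t * (g s ⬝ᵥ v))))
        - m * lam / 2 * (∑ i, ((θa i - θ₀ i) + t * v i) ^ 2)
        + α * ((ga ⬝ᵥ (θa - θ₀)) + t * (ga ⬝ᵥ v)) with hψdef
  have key : ∀ (w : Fin p → ℝ) (t : ℝ),
      w ⬝ᵥ (θa + t • v - θ₀) = w ⬝ᵥ (θa - θ₀) + t * (w ⬝ᵥ v) := by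
    intro w t
    simp only [dotProduct, Pi.add_apply, Pi.sub_apply, Pi.smul_apply, smul_eq_mul,
      Finset.mul_sum, ← Finset.sum_add_distrib]
    exact Finset.sum_congr rfl fun i _ => by ring
  have hψpt : ∀ t : ℝ,
      ellLam θ₀ g r b lam m (θa + t • v) + α * (ga ⬝ᵥ (θa + t • v - θ₀)) = ψ t := by
    intro t
    have hq : ∀ i : Fin p, ((θa + t • v) i - θ₀ i) ^ 2 = ((θa i - θ₀ i) + t * v i) ^ 2 :=
      fun i => by simp only [Pi.add_apply, Pi.smul_apply, smul_eq_mul]; ring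
    simp only [hψdef, ellLam, key, hq]
  have hmaxψ : IsLocalMax ψ 0 := Filter.Eventually.of_forall fun t => by
    rw [← hψpt t, ← hψpt 0]
    simpa using hθa (θa + t • v)
  have hlin : ∀ (c d : ℝ), HasDerivAt (fun t : ℝ => c + t * d) d 0 := fun c d => by
    simpa using ((hasDerivAt_id (0:ℝ)).mul_const d).const_add c
  have h1 : HasDerivAt (fun t => ∑ s, (r s * ((g s ⬝ᵥ (θa - θ₀)) + t * (g s ⬝ᵥ v))
        - b ((g s ⬝ᵥ (θa - θ₀)) + t * (g s ⬝ᵥ v))))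
      (∑ s, (r s - deriv b (g s ⬝ᵥ (θa - θ₀))) * (g s ⬝ᵥ v)) 0 := by
    refine HasDerivAt.fun_sum fun s _ => ?_
    have hl := hlin (g s ⬝ᵥ (θa - θ₀)) (g s ⬝ᵥ v)
    have hbc : HasDerivAt (fun t => b ((g s ⬝ᵥ (θa - θ₀)) + t * (g s ⬝ᵥ v)))
        (deriv b (g s ⬝ᵥ (θa - θ₀)) * (g s ⬝ᵥ v)) 0 := by
      have := (hb ((g s ⬝ᵥ (θa - θ₀)) + 0 * (g s ⬝ᵥ v))).hasDerivAt.comp 0 hl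
      simpa [Function.comp_def] using this
    simpa [sub_mul, Pi.sub_def] using (hl.const_mul (r s)).sub hbc
  have h2 : HasDerivAt (fun t => ∑ i, ((θa i - θ₀ i) + t * v i) ^ 2)
      (∑ i, 2 * (θa i - θ₀ i) * v i) 0 := by
    refine HasDerivAt.fun_sum fun i _ => ?_
    simpa [Pi.pow_def] using (hlin (θa i - θ₀ i) (v i)).pow 2
  have h3 : HasDerivAt (fun t => α * ((ga ⬝ᵥ (θa - θ₀)) + t * (ga ⬝ᵥ v)))
      (α * (ga ⬝ᵥ v)) 0 := (hlin _ _).const_mul α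
  have h4 : HasDerivAt ψ ((∑ s, (r s - deriv b (g s ⬝ᵥ (θa - θ₀))) * (g s ⬝ᵥ v))
      - m * lam / 2 * (∑ i, 2 * (θa i - θ₀ i) * v i) + α * (ga ⬝ᵥ v)) 0 :=
    (h1.sub (h2.const_mul (m * lam / 2))).add h3
  have h6 := hmaxψ.deriv_eq_zero
  rw [h4.deriv] at h6
  have hrw : m * lam / 2 * (∑ i, 2 * (θa i - θ₀ i) * v i)
      = m * lam * ((θa - θ₀) ⬝ᵥ v) := by
    simp only [dotProduct, Pi.sub_apply, Finset.mul_sum]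
    exact Finset.sum_congr rfl fun i _ => by ring
  linarith [h6, hrw]

/-- comparing the first-order conditions of the two arm-specific RBMLE
estimates θ_i, θ_j yields intermediate points ξ_s (from the mean value theorem applied to
b') such that the curvature matrix U = λI + (1/m)∑_s b''(ξ_s) g_s g_sᵀ is symmetric
positive definite and
0 = (g_i + g_j)ᵀ(θ_j − θ_i) + (α/m)·(‖g_i‖²_{U⁻¹} − ‖g_j‖²_{U⁻¹}). -/
theorem stmt9 {p n : ℕ} (hp : 1 ≤ p) (hn : 1 ≤ n)
    (θ₀ : Fin p → ℝ) (g : Fin n → Fin p → ℝ) (r : Fin n → ℝ)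
    (lam m : ℝ) (hlam : 0 < lam) (hm : 0 < m)
    (b : ℝ → ℝ) (Lb Ub : ℝ) (hLb : 0 < Lb) (hLU : Lb ≤ Ub)
    (hb : Differentiable ℝ b) (hb' : Differentiable ℝ (deriv b))
    (hlow : ∀ z : ℝ, Lb ≤ deriv (deriv b) z) (hup : ∀ z : ℝ, deriv (deriv b) z ≤ Ub)
    (α : ℝ) (hα : 0 ≤ α) (gi gj : Fin p → ℝ)
    (θi : Fin p → ℝ)
    (hθi : ∀ θ : Fin p → ℝ, ellLam θ₀ g r b lam m θ + α * (gi ⬝ᵥ (θ - θ₀)) ≤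
        ellLam θ₀ g r b lam m θi + α * (gi ⬝ᵥ (θi - θ₀)))
    (θj : Fin p → ℝ)
    (hθj : ∀ θ : Fin p → ℝ, ellLam θ₀ g r b lam m θ + α * (gj ⬝ᵥ (θ - θ₀)) ≤
        ellLam θ₀ g r b lam m θj + α * (gj ⬝ᵥ (θj - θ₀))) :
    ∃ ξ : Fin n → ℝ,
      (∀ s : Fin n, ξ s ∈ Set.uIcc (g s ⬝ᵥ (θi - θ₀)) (g s ⬝ᵥ (θj - θ₀))) ∧
      (lam • (1 : Matrix (Fin p) (Fin p) ℝ) +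
        (1 / m) • ∑ s, deriv (deriv b) (ξ s) • vecMulVec (g s) (g s)).PosDef ∧
      0 = (gi + gj) ⬝ᵥ (θj - θi) + α / m *
        ((gi ⬝ᵥ (lam • (1 : Matrix (Fin p) (Fin p) ℝ) +
            (1 / m) • ∑ s, deriv (deriv b) (ξ s) • vecMulVec (g s) (g s))⁻¹.mulVec gi) -
         (gj ⬝ᵥ (lam • (1 : Matrix (Fin p) (Fin p) ℝ) +
            (1 / m) • ∑ s, deriv (deriv b) (ξ s) • vecMulVec (g s) (g s))⁻¹.mulVec gj)) := by
  classical
  choose ξ hmem hmvt using fun s : Fin n =>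
    mvt_uIcc (deriv b) hb' (g s ⬝ᵥ (θi - θ₀)) (g s ⬝ᵥ (θj - θ₀))
  set U : Matrix (Fin p) (Fin p) ℝ := lam • (1 : Matrix (Fin p) (Fin p) ℝ) +
      (1 / m) • ∑ s, deriv (deriv b) (ξ s) • vecMulVec (g s) (g s) with hUdef
  -- symmetry
  have herm : U.IsHermitian := by
    ext i' j'
    simp only [hUdef, Matrix.conjTranspose_apply, star_trivial, Matrix.add_apply,
      Matrix.smul_apply, Matrix.sum_apply, vecMulVec_apply, Matrix.one_apply, smul_eq_mul]
    congr 1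
    · simp [eq_comm]
    · congr 1
      exact Finset.sum_congr rfl fun s _ => by ring
  -- positive definiteness
  have hpos : ∀ x : Fin p → ℝ, x ≠ 0 → 0 < x ⬝ᵥ U *ᵥ x := by
    intro x hx
    rw [hUdef, quadform]
    have h1 : 0 < x ⬝ᵥ x := by
      refine lt_of_le_of_ne (Finset.sum_nonneg fun i _ => mul_self_nonneg (x i)) ?_
      intro h
      exact hx ((dotProduct_self_eq_zero).1 h.symm)
    have h2 : 0 ≤ ∑ s, deriv (deriv b) (ξ s) * (g s ⬝ᵥ x) ^ 2 :=
      Finset.sum_nonneg fun s _ =>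
        mul_nonneg (le_trans hLb.le (hlow (ξ s))) (sq_nonneg _)
    have h3 : 0 < lam * (x ⬝ᵥ x) := mul_pos hlam h1
    have h4 : 0 ≤ (1 / m) * ∑ s, deriv (deriv b) (ξ s) * (g s ⬝ᵥ x) ^ 2 :=
      mul_nonneg (by positivity) h2
    linarith
  have hPD : U.PosDef := posDef_iff_dotProduct_mulVec.mpr ⟨herm, fun x hx => by simpa using hpos x hx⟩
  have hdet : IsUnit U.det := isUnit_iff_ne_zero.2 hPD.det_pos.ne'
  -- first order conditions
  have fi := foc θ₀ g r lam m b hb α gi θi hθi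
  have fj := foc θ₀ g r lam m b hb α gj θj hθj
  have dotsub : ∀ w : Fin p → ℝ, w ⬝ᵥ (θj - θ₀) - w ⬝ᵥ (θi - θ₀) = w ⬝ᵥ (θj - θi) := by
    intro w
    simp only [dotProduct, Pi.sub_apply, ← Finset.sum_sub_distrib]
    exact Finset.sum_congr rfl fun i _ => by ring
  -- the key vector identity  U (θj - θi) = (α/m)(gj - gi)
  have hUd : U *ᵥ (θj - θi) = (α / m) • (gj - gi) := by
    rw [hUdef, curvMat_mulVec]
    funext k
    have hik := fi (Pi.single k 1)
    have hjk := fj (Pi.single k 1)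
    simp only [dotProduct_single, mul_one, Pi.sub_apply] at hik hjk
    have hsum : (∑ s, (r s - deriv b (g s ⬝ᵥ (θj - θ₀))) * g s k)
        - (∑ s, (r s - deriv b (g s ⬝ᵥ (θi - θ₀))) * g s k)
        = - ∑ s, deriv (deriv b) (ξ s) * (g s ⬝ᵥ (θj - θi)) * g s k := by
      rw [← Finset.sum_sub_distrib, ← Finset.sum_neg_distrib]
      refine Finset.sum_congr rfl fun s _ => ?_
      have h1 := hmvt s
      have h2 := dotsub (g s)
      linear_combination (-(g s k)) * h1 - (deriv (deriv b) (ξ s) * g s k) * h2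
    simp only [Pi.add_apply, Pi.smul_apply, Pi.sub_apply, Finset.sum_apply, smul_eq_mul]
    have hm' : m ≠ 0 := hm.ne'
    generalize hS : ∑ s, deriv (deriv b) (ξ s) * (g s ⬝ᵥ (θj - θi)) * g s k = S at hsum ⊢
    have h : m * lam * (θj k - θi k) + S = α * (gj k - gi k) := by linarith [hik, hjk, hsum]
    field_simp
    linarith [h]
  -- invert
  have hd : θj - θi = (α / m) • (U⁻¹ *ᵥ (gj - gi)) := by
    have h1 : U⁻¹ *ᵥ (U *ᵥ (θj - θi)) = θj - θi := by
      rw [Matrix.mulVec_mulVec, Matrix.nonsing_inv_mul U hdet, Matrix.one_mulVec]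
    rw [← h1, hUd, Matrix.mulVec_smul]
  have hsymm := dot_mulVec_symm herm.inv gi gj
  refine ⟨ξ, hmem, hPD, ?_⟩
  rw [show (lam • (1 : Matrix (Fin p) (Fin p) ℝ) +
      (1 / m) • ∑ s, deriv (deriv b) (ξ s) • vecMulVec (g s) (g s)) = U from rfl]
  rw [hd]
  simp only [dotProduct_smul, smul_eq_mul, Matrix.mulVec_sub, dotProduct_sub, add_dotProduct]
  linear_combination (-(α / m)) * hsymm
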